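/- arXiv:2407.14858 — 12 statements merged into one kernel-verified Lean document; each statement's English description precedes it below -/
import Mathlib

section
/- Let Q be a finite type with a binary operation · whose left translations L_a(x) = a·x and right translations R_a(x) = x·a are bijections for every a ∈ Q, and let \ denote left division (x\z is the unique y with x·y = z). Then the operations A(x,y) = x·y and ^{(12)}A(x,y) = y·x are orthogonal if and only if for all x, y, z ∈ Q, (x\z)·x = (y\z)·y implies x = y. -/
/-- For a finite quasigroup `(Q, ·)` with left division `\`,
the operation `A(x,y) = x·y` and its (12)-parastrophe `A^{(12)}(x,y) = y·x`
are orthogonal iff `(x\z)·x = (y\z)·y → x = y` for all `x y z`. -/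
theorem orth_parastrophe_12 {Q : Type*} [Finite Q] (mul : Q → Q → Q)
    (hL : ∀ a : Q, Function.Bijective (fun x => mul a x))
    (hR : ∀ a : Q, Function.Bijective (fun x => mul x a))
    (ld : Q → Q → Q)
    (hld : ∀ x z : Q, mul x (ld x z) = z) :
    Function.Bijective (fun p : Q × Q => (mul p.1 p.2, mul p.2 p.1)) ↔
      ∀ x y z : Q, mul (ld x z) x = mul (ld y z) y → x = y := by
  constructor
  · intro hbij x y z h
    have := hbij.injective (a₁ := (ld x z, x)) (a₂ := (ld y z, y))
      (by simp [h, hld])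
    exact (Prod.ext_iff.mp this).2
  · intro hcond
    rw [← Finite.injective_iff_bijective]
    rintro ⟨a, b⟩ ⟨c, d⟩ h
    simp only [Prod.mk.injEq] at h
    obtain ⟨h1, h2⟩ := h
    have ha : ld b (mul b a) = a := (hL b).injective (by simp [hld])
    have hc : ld d (mul d c) = c := (hL d).injective (by simp [hld])
    have hbd : b = d := hcond b d (mul b a) (by rw [ha, h1, h2, hc])
    subst hbd
    have hac : a = c := (hR b).injective h1
    simp [hac]
end

section
/- Let Q be a finite type with a binary operation · whose left translations L_a(x) = a·x and right translations R_a(x) = x·a are bijections for every a ∈ Q, and let / denote right division (z/y is the unique x with x·y = z). Then the operations A(x,y) = x·y and ^{(13)}A(x,y) = x/y are orthogonal if and only if for all x, y, z ∈ Q, (z·x)·x = (z·y)·y implies x = y. -/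
/-- For a finite quasigroup `(Q, ·)` with right division `/`,
the operation `A(x,y) = x·y` and its (13)-parastrophe `A^{(13)}(x,y) = x/y`
are orthogonal iff `(z·x)·x = (z·y)·y → x = y` for all `x y z`. -/
theorem orth_parastrophe_13 {Q : Type*} [Finite Q] (mul : Q → Q → Q)
    (hL : ∀ a : Q, Function.Bijective (fun x => mul a x))
    (hR : ∀ a : Q, Function.Bijective (fun x => mul x a))
    (rd : Q → Q → Q)
    (hrd : ∀ z y : Q, mul (rd z y) y = z) :
    Function.Bijective (fun p : Q × Q => (mul p.1 p.2, rd p.1 p.2)) ↔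
      ∀ x y z : Q, mul (mul z x) x = mul (mul z y) y → x = y := by
  have hcancel : ∀ u y : Q, rd (mul u y) y = u := by
    intro u y
    exact (hR y).injective (by simpa using hrd (mul u y) y)
  constructor
  · intro hF x y z h
    have h2 : (fun p : Q × Q => (mul p.1 p.2, rd p.1 p.2)) (mul z x, x) =
        (fun p : Q × Q => (mul p.1 p.2, rd p.1 p.2)) (mul z y, y) := by
      simp only [hcancel, h]
    have := hF.injective h2
    exact congrArg Prod.snd this
  · intro hc
    rw [Finite.injective_iff_bijective.symm]
    rintro ⟨a, b⟩ ⟨a', b'⟩ h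
    have h1 : mul a b = mul a' b' := congrArg Prod.fst h
    have h2 : rd a b = rd a' b' := congrArg Prod.snd h
    have ha : mul (rd a b) b = a := hrd a b
    have ha' : mul (rd a' b') b' = a' := hrd a' b'
    have hbb : b = b' := by
      apply hc b b' (rd a b)
      rw [ha, h2, ha', h1]
    subst hbb
    have haa : a = a' := (hR b).injective (by simpa using h1)
    simp [haa]
end

section
/- Let Q be a finite type with a binary operation · whose left translations L_a(x) = a·x and right translations R_a(x) = x·a are bijections for every a ∈ Q, and let \ denote left division (x\z is the unique y with x·y = z). Then the operations A(x,y) = x·y and ^{(23)}A(x,y) = x\y are orthogonal if and only if for all x, y, z ∈ Q, x·(x·z) = y·(y·z) implies x = y. -/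
/-- For a finite quasigroup `(Q, ·)` with left division `\`,
the operation `A(x,y) = x·y` and its (23)-parastrophe `A^{(23)}(x,y) = x\y`
are orthogonal iff `x·(x·z) = y·(y·z) → x = y` for all `x y z`. -/
theorem orth_parastrophe_23 {Q : Type*} [Finite Q] (mul : Q → Q → Q)
    (hL : ∀ a : Q, Function.Bijective (fun x => mul a x))
    (hR : ∀ a : Q, Function.Bijective (fun x => mul x a))
    (ld : Q → Q → Q)
    (hld : ∀ x z : Q, mul x (ld x z) = z) :
    Function.Bijective (fun p : Q × Q => (mul p.1 p.2, ld p.1 p.2)) ↔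
      ∀ x y z : Q, mul x (mul x z) = mul y (mul y z) → x = y := by
  have hld' : ∀ x y : Q, ld x (mul x y) = y := by
    intro x y
    exact (hL x).injective (hld x (mul x y))
  constructor
  · intro hF x y z h
    have := hF.injective (a₁ := (x, mul x z)) (a₂ := (y, mul y z)) (by
      simp only [Prod.mk.injEq, hld']
      exact ⟨h, trivial⟩)
    exact (Prod.mk.injEq _ _ _ _ ▸ this).1
  · intro h
    rw [← Finite.injective_iff_bijective]
    rintro ⟨x, y⟩ ⟨x', y'⟩ he
    simp only [Prod.mk.injEq] at he
    obtain ⟨h1, h2⟩ := he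
    have hy : y = mul x (ld x y) := (hld x y).symm
    have hy' : y' = mul x' (ld x' y') := (hld x' y').symm
    have hx : x = x' := by
      apply h x x' (ld x y)
      rw [← hy, h1, hy', h2]
    subst hx
    simp only [Prod.mk.injEq]
    exact ⟨trivial, by rw [hy, hy', h2]⟩
end

section
/- Let Q be a finite type with a binary operation · whose left translations L_a(x) = a·x and right translations R_a(x) = x·a are bijections for every a ∈ Q, and let / denote right division (z/y is the unique x with x·y = z). Then the operations A(x,y) = x·y and ^{(123)}A(x,y) = y/x are orthogonal if and only if for all x, y, z ∈ Q, x·(z·x) = y·(z·y) implies x = y. -/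
/-- For a finite quasigroup `(Q, ·)` with right division `/`,
the operation `A(x,y) = x·y` and its (123)-parastrophe `A^{(123)}(x,y) = y/x`
are orthogonal iff `x·(z·x) = y·(z·y) → x = y` for all `x y z`. -/
theorem orth_parastrophe_123 {Q : Type*} [Finite Q] (mul : Q → Q → Q)
    (hL : ∀ a : Q, Function.Bijective (fun x => mul a x))
    (hR : ∀ a : Q, Function.Bijective (fun x => mul x a))
    (rd : Q → Q → Q)
    (hrd : ∀ z y : Q, mul (rd z y) y = z) :
    Function.Bijective (fun p : Q × Q => (mul p.1 p.2, rd p.2 p.1)) ↔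
      ∀ x y z : Q, mul x (mul z x) = mul y (mul z y) → x = y := by
  have hrd' : ∀ w x y : Q, mul w x = y → rd y x = w := by
    intro w x y h
    exact (hR x).1 (by simpa using (hrd y x).trans h.symm)
  constructor
  · intro hF x y z h
    have h1 : rd (mul z x) x = z := hrd' z x _ rfl
    have h2 : rd (mul z y) y = z := hrd' z y _ rfl
    have := hF.1 (a₁ := (x, mul z x)) (a₂ := (y, mul z y))
      (by simp [h, h1, h2])
    exact congrArg Prod.fst this
  · intro hc
    rw [← Finite.injective_iff_bijective]
    rintro ⟨a, b⟩ ⟨c, d⟩ h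
    simp only [Prod.mk.injEq] at h
    obtain ⟨h1, h2⟩ := h
    have hb : mul (rd b a) a = b := hrd b a
    have hd : mul (rd d c) c = d := hrd d c
    have hac : a = c := hc a c (rd b a) (by rw [hb, h1, h2, hd])
    subst hac
    have : b = d := by rw [← hb, ← hd, h2]
    simp [this]
end

section
/- Let Q be a finite type with a binary operation · whose left translations L_a(x) = a·x and right translations R_a(x) = x·a are bijections for every a ∈ Q, and let \ denote left division (x\z is the unique y with x·y = z). Then the operations A(x,y) = x·y and ^{(132)}A(x,y) = y\x are orthogonal if and only if for all x, y, z ∈ Q, (x·z)·x = (y·z)·y implies x = y. -/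
/-- For a finite quasigroup `(Q, ·)` with left division `\`,
the operation `A(x,y) = x·y` and its (132)-parastrophe `A^{(132)}(x,y) = y\x`
are orthogonal iff `(x·z)·x = (y·z)·y → x = y` for all `x y z`. -/
theorem orth_parastrophe_132 {Q : Type*} [Finite Q] (mul : Q → Q → Q)
    (hL : ∀ a : Q, Function.Bijective (fun x => mul a x))
    (hR : ∀ a : Q, Function.Bijective (fun x => mul x a))
    (ld : Q → Q → Q)
    (hld : ∀ x z : Q, mul x (ld x z) = z) :
    Function.Bijective (fun p : Q × Q => (mul p.1 p.2, ld p.2 p.1)) ↔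
      ∀ x y z : Q, mul (mul x z) x = mul (mul y z) y → x = y := by
  have hldm : ∀ x z : Q, ld x (mul x z) = z := by
    intro x z
    exact (hL x).1 (by simpa using hld x (mul x z))
  constructor
  · intro hF x y z h
    have : (fun p : Q × Q => (mul p.1 p.2, ld p.2 p.1)) (mul x z, x)
        = (fun p : Q × Q => (mul p.1 p.2, ld p.2 p.1)) (mul y z, y) := by
      simp only [hldm, h]
    have := hF.1 this
    exact (Prod.mk.injEq _ _ _ _ ▸ this).2
  · intro h
    rw [← Finite.injective_iff_bijective]
    rintro ⟨a, b⟩ ⟨c, d⟩ he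
    simp only [Prod.mk.injEq] at he
    obtain ⟨h1, h2⟩ := he
    have ha : a = mul b (ld b a) := (hld b a).symm
    have hc : c = mul d (ld d c) := (hld d c).symm
    have key : mul (mul b (ld b a)) b = mul (mul d (ld d c)) d := by
      rw [← ha, ← hc, h1]
    rw [h2] at key ha
    have hbd : b = d := h b d (ld d c) key
    subst hbd
    exact Prod.mk.injEq .. ▸ ⟨ha.trans hc.symm, rfl⟩
end

section
/- Let (Q,+) be an abelian group, let φ and ψ be automorphisms of (Q,+), let c ∈ Q, and let A(x,y) = φ(x) + ψ(y) + c. Then A and its (12)-parastrophe ^{(12)}A(x,y) = ψ(x) + φ(y) + c are orthogonal if and only if both maps x ↦ φ(x) − ψ(x) and x ↦ φ(x) + ψ(x) are bijections of Q. -/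
/-- A T-quasigroup `A(x,y) = φ x + ψ y + c` over an abelian group is
orthogonal to its (12)-parastrophe `ψ x + φ y + c` iff both `φ - ψ` and `φ + ψ`
are bijections. -/
theorem Tquasigroup_orth_12 {Q : Type*} [AddCommGroup Q]
    (φ ψ : Q ≃+ Q) (c : Q) :
    Function.Bijective
        (fun p : Q × Q => (φ p.1 + ψ p.2 + c, ψ p.1 + φ p.2 + c)) ↔
      Function.Bijective (fun x : Q => φ x - ψ x) ∧
        Function.Bijective (fun x : Q => φ x + ψ x) := by
  have key : (fun p : Q × Q => (φ p.1 + ψ p.2 + c, ψ p.1 + φ p.2 + c))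
      = (Equiv.prodCongr (Equiv.addRight c) (Equiv.addRight c)) ∘
        (fun p : Q × Q => (φ p.1 + ψ p.2, ψ p.1 + φ p.2)) := rfl
  rw [key, Equiv.comp_bijective]
  constructor
  · rintro ⟨hinj, hsurj⟩
    refine ⟨⟨?_, ?_⟩, ?_, ?_⟩
    · -- φ - ψ injective
      intro x x' h
      have h' : φ x - ψ x = φ x' - ψ x' := h
      have h2 := hinj (a₁ := (x, -x)) (a₂ := (x', -x')) (by
        simp only [map_neg, ← sub_eq_add_neg, Prod.mk.injEq]
        refine ⟨h', ?_⟩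
        rw [← neg_sub (φ x) (ψ x), h', neg_sub])
      exact (Prod.mk.injEq _ _ _ _ ▸ h2).1
    · -- φ - ψ surjective
      intro v
      obtain ⟨⟨x, y⟩, hxy⟩ := hsurj (v, 0)
      simp only [Prod.mk.injEq] at hxy
      refine ⟨x - y, ?_⟩
      have h1 := hxy.1
      have h2 : ψ x = -(φ y) := eq_neg_of_add_eq_zero_left hxy.2
      simp only [map_sub]
      rw [← h1, h2]
      abel
    · -- φ + ψ injective
      intro t t' h
      have h' : φ t + ψ t = φ t' + ψ t' := h
      have h2 := hinj (a₁ := (t, t)) (a₂ := (t', t')) (by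
        simp only [Prod.mk.injEq]
        exact ⟨h', by rw [add_comm (ψ t), add_comm (ψ t'), h']⟩)
      exact (Prod.mk.injEq _ _ _ _ ▸ h2).1
    · -- φ + ψ surjective
      intro u
      obtain ⟨⟨x, y⟩, hxy⟩ := hsurj (u, 0)
      simp only [Prod.mk.injEq] at hxy
      refine ⟨x + y, ?_⟩
      simp only [map_add]
      rw [show φ x + φ y + (ψ x + ψ y) = (φ x + ψ y) + (ψ x + φ y) by abel, hxy.1, hxy.2,
        add_zero]
  · rintro ⟨hd, hs⟩
    constructor
    · rintro ⟨x, y⟩ ⟨x', y'⟩ h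
      simp only [Prod.mk.injEq] at h ⊢
      obtain ⟨h1, h2⟩ := h
      have hB : x - y = x' - y' := by
        apply hd.1
        simp only [map_sub]
        rw [show φ x - φ y - (ψ x - ψ y) = (φ x + ψ y) - (ψ x + φ y) by abel, h1, h2,
          show φ x' - φ y' - (ψ x' - ψ y') = (φ x' + ψ y') - (ψ x' + φ y') by abel]
      have hu : y - y' = x - x' := by
        have := sub_eq_sub_iff_sub_eq_sub.mp hB
        rw [this]
      have hx : x = x' := by
        have hz : φ (x - x') + ψ (x - x') = φ 0 + ψ 0 := by
          simp only [map_zero, add_zero, map_sub]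
          have hy : ψ x - ψ x' = ψ y - ψ y' := by rw [← map_sub, ← map_sub, hu]
          rw [hy, show φ x - φ x' + (ψ y - ψ y') = (φ x + ψ y) - (φ x' + ψ y') by abel, h1,
            sub_self]
        have := hs.1 hz
        exact sub_eq_zero.mp this
      refine ⟨hx, ?_⟩
      have : y - y' = 0 := by rw [hu, hx, sub_self]
      exact sub_eq_zero.mp this
    · rintro ⟨u, v⟩
      obtain ⟨t, ht⟩ := hs.2 (u + v)
      obtain ⟨x, hx⟩ := hd.2 (u - ψ t)
      have hx' : φ x - ψ x = u - ψ t := hx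
      have ht' : φ t + ψ t = u + v := ht
      refine ⟨(x, t - x), ?_⟩
      simp only [Prod.mk.injEq, map_sub]
      constructor
      · rw [show φ x + (ψ t - ψ x) = (φ x - ψ x) + ψ t by abel, hx']
        abel
      · rw [show ψ x + (φ t - φ x) = φ t - (φ x - ψ x) by abel, hx',
          show φ t - (u - ψ t) = (φ t + ψ t) - u by abel, ht']
        abel
end

section
/- Let (Q,+) be an abelian group, let φ and ψ be automorphisms of (Q,+), let c ∈ Q, and let A(x,y) = φ(x) + ψ(y) + c. Then A and its (13)-parastrophe ^{(13)}A(x,y) = φ⁻¹(x) − φ⁻¹(ψ(y)) − φ⁻¹(c) are orthogonal if and only if the map x ↦ x + φ(x) is a bijection of Q. -/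
/-- A T-quasigroup `A(x,y) = φ x + ψ y + c` over an abelian group is
orthogonal to its (13)-parastrophe `φ⁻¹ x - φ⁻¹ (ψ y) - φ⁻¹ c` iff
`x ↦ x + φ x` is a bijection. -/
theorem Tquasigroup_orth_13 {Q : Type*} [AddCommGroup Q]
    (φ ψ : Q ≃+ Q) (c : Q) :
    Function.Bijective
        (fun p : Q × Q =>
          (φ p.1 + ψ p.2 + c, φ.symm p.1 - φ.symm (ψ p.2) - φ.symm c)) ↔
      Function.Bijective (fun x : Q => x + φ x) := by
  -- post-composition equiv
  set g : Q → Q := fun x => x + φ x with hg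
  let e : Q × Q ≃ Q × Q :=
    { toFun := fun p => (p.1 + φ p.2, φ p.2 + c)
      invFun := fun q => (q.1 - q.2 + c, φ.symm (q.2 - c))
      left_inv := by intro p; ext <;> simp <;> abel
      right_inv := by intro q; ext <;> simp <;> abel }
  -- pre-composition equiv
  let L : Q × Q ≃ Q × Q :=
    { toFun := fun p => (p.1, p.1 - ψ p.2)
      invFun := fun q => (q.1, ψ.symm (q.1 - q.2))
      left_inv := by intro p; simp
      right_inv := by intro q; simp }
  have key : (e : Q × Q → Q × Q) ∘
      (fun p : Q × Q =>
        (φ p.1 + ψ p.2 + c, φ.symm p.1 - φ.symm (ψ p.2) - φ.symm c)) =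
      (Prod.map g id) ∘ (L : Q × Q → Q × Q) := by
    funext p
    simp only [Function.comp, e, L, Equiv.coe_fn_mk, Prod.map, hg, id]
    ext
    · simp [map_sub]; abel
    · simp [map_sub]
  constructor
  · intro h
    have h2 : Function.Bijective ((Prod.map g id) ∘ (L : Q × Q → Q × Q)) := by
      rw [← key]; exact e.bijective.comp h
    have h3 : Function.Bijective (Prod.map g (id : Q → Q)) := by
      have := h2.comp L.symm.bijective
      simpa [Function.comp_assoc] using this
    exact (Prod.map_bijective.mp h3).1
  · intro h
    have h3 : Function.Bijective (Prod.map g (id : Q → Q)) :=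
      Prod.map_bijective.mpr ⟨h, Function.bijective_id⟩
    have h2 : Function.Bijective ((Prod.map g id) ∘ (L : Q × Q → Q × Q)) :=
      h3.comp L.bijective
    rw [← key] at h2
    have := e.symm.bijective.comp h2
    simpa [← Function.comp_assoc] using this
end

section
/- Let (Q,+) be an abelian group, let φ and ψ be automorphisms of (Q,+), let c ∈ Q, and let A(x,y) = φ(x) + ψ(y) + c. Then A and its (23)-parastrophe ^{(23)}A(x,y) = −ψ⁻¹(φ(x)) + ψ⁻¹(y) − ψ⁻¹(c) are orthogonal if and only if the map x ↦ x + ψ(x) is a bijection of Q. -/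
/-- A T-quasigroup `A(x,y) = φ x + ψ y + c` over an abelian group is
orthogonal to its (23)-parastrophe `-ψ⁻¹ (φ x) + ψ⁻¹ y - ψ⁻¹ c` iff
`x ↦ x + ψ x` is a bijection. -/
theorem Tquasigroup_orth_23 {Q : Type*} [AddCommGroup Q]
    (φ ψ : Q ≃+ Q) (c : Q) :
    Function.Bijective
        (fun p : Q × Q =>
          (φ p.1 + ψ p.2 + c, -ψ.symm (φ p.1) + ψ.symm p.2 - ψ.symm c)) ↔
      Function.Bijective (fun x : Q => x + ψ x) := by
  set g : Q → Q := fun x => x + ψ x with hg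
  -- e2 : (x,y) ↦ (φ x, y - φ x)
  let e2 : Q × Q ≃ Q × Q :=
    { toFun := fun p => (φ p.1, p.2 - φ p.1)
      invFun := fun p => (φ.symm p.1, p.2 + p.1)
      left_inv := by intro p; simp
      right_inv := by intro p; simp }
  -- e1 : (a,t) ↦ (a + ψ t + c, ψ.symm (t - c))
  let e1 : Q × Q ≃ Q × Q :=
    { toFun := fun p => (p.1 + ψ p.2 + c, ψ.symm (p.2 - c))
      invFun := fun p => (p.1 - ψ (ψ p.2 + c) - c, ψ p.2 + c)
      left_inv := by intro p; simp [Prod.ext_iff]; abel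
      right_inv := by intro p; simp [Prod.ext_iff]; abel }
  have hfact : (fun p : Q × Q =>
      (φ p.1 + ψ p.2 + c, -ψ.symm (φ p.1) + ψ.symm p.2 - ψ.symm c))
      = e1 ∘ (Prod.map g id) ∘ e2 := by
    funext p
    simp only [e1, e2, hg, Function.comp_apply, Prod.map_apply, id_eq,
      Equiv.coe_fn_mk, map_add, map_sub, map_neg]
    rw [Prod.ext_iff]
    constructor
    · abel
    · abel
  rw [hfact, Equiv.comp_bijective, Equiv.bijective_comp, Prod.map_bijective]
  simp [Function.bijective_id]
end

section
/- Let (Q,+) be an abelian group, let φ and ψ be automorphisms of (Q,+), let c ∈ Q, and let A(x,y) = φ(x) + ψ(y) + c. Then A and its (123)-parastrophe ^{(123)}A(x,y) = −φ⁻¹(ψ(x)) + φ⁻¹(y) − φ⁻¹(c) are orthogonal if and only if the map x ↦ φ(x) + ψ(ψ(x)) is a bijection of Q. -/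
/-- A T-quasigroup `A(x,y) = φ x + ψ y + c` over an abelian group is
orthogonal to its (123)-parastrophe `-φ⁻¹ (ψ x) + φ⁻¹ y - φ⁻¹ c` iff
`x ↦ φ x + ψ (ψ x)` is a bijection. -/
theorem Tquasigroup_orth_123 {Q : Type*} [AddCommGroup Q]
    (φ ψ : Q ≃+ Q) (c : Q) :
    Function.Bijective
        (fun p : Q × Q =>
          (φ p.1 + ψ p.2 + c, -φ.symm (ψ p.1) + φ.symm p.2 - φ.symm c)) ↔
      Function.Bijective (fun x : Q => φ x + ψ (ψ x)) := by
  set g : Q → Q := fun x => φ x + ψ (ψ x) with hg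
  let e1 : Q × Q ≃ Q × Q :=
    { toFun := fun p => (p.1, p.2 - ψ p.1)
      invFun := fun p => (p.1, p.2 + ψ p.1)
      left_inv := fun p => by simp
      right_inv := fun p => by simp }
  let e2 : Q × Q ≃ Q × Q :=
    { toFun := fun p => (p.1 + ψ p.2 + c, φ.symm (p.2 - c))
      invFun := fun p => (p.1 - ψ (φ p.2 + c) - c, φ p.2 + c)
      left_inv := fun p => by ext <;> simp <;> abel
      right_inv := fun p => by ext <;> simp <;> abel }
  have key : (fun p : Q × Q =>
      (φ p.1 + ψ p.2 + c, -φ.symm (ψ p.1) + φ.symm p.2 - φ.symm c))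
      = e2 ∘ (Prod.map g id) ∘ e1 := by
    funext p
    simp only [e1, e2, Function.comp_apply, Prod.map, Equiv.coe_fn_mk, hg, id]
    refine Prod.ext ?_ ?_
    · simp [map_sub]
    · simp [map_sub]; abel
  rw [key, Equiv.comp_bijective, Equiv.bijective_comp, Prod.map_bijective]
  simp [Function.bijective_id]
end

section
/- Let (Q,+) be an abelian group, let φ and ψ be automorphisms of (Q,+), let c ∈ Q, and let A(x,y) = φ(x) + ψ(y) + c. Then A and its (132)-parastrophe ^{(132)}A(x,y) = ψ⁻¹(x) − ψ⁻¹(φ(y)) − ψ⁻¹(c) are orthogonal if and only if the map x ↦ φ(φ(x)) + ψ(x) is a bijection of Q. -/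
/-- A T-quasigroup `A(x,y) = φ x + ψ y + c` over an abelian group is
orthogonal to its (132)-parastrophe `ψ⁻¹ x - ψ⁻¹ (φ y) - ψ⁻¹ c` iff
`x ↦ φ (φ x) + ψ x` is a bijection. -/
theorem Tquasigroup_orth_132 {Q : Type*} [AddCommGroup Q]
    (φ ψ : Q ≃+ Q) (c : Q) :
    Function.Bijective
        (fun p : Q × Q =>
          (φ p.1 + ψ p.2 + c, ψ.symm p.1 - ψ.symm (φ p.2) - ψ.symm c)) ↔
      Function.Bijective (fun x : Q => φ (φ x) + ψ x) := by
  set g : Q → Q := fun x => φ (φ x) + ψ x with hg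
  -- change of variables on the domain
  let τ : Q × Q ≃ Q × Q :=
    { toFun := fun p => (p.2, ψ.symm (p.1 - φ p.2 - c))
      invFun := fun q => (ψ q.2 + φ q.1 + c, q.1)
      left_inv := by
        intro p
        simp only [AddEquiv.apply_symm_apply]
        ext <;> simp <;> abel
      right_inv := by
        intro q
        ext <;> simp <;> abel }
  -- change of variables on the codomain
  let σ : Q × Q ≃ Q × Q :=
    { toFun := fun q => (q.1 + φ (ψ q.2) + φ c + c, q.2)
      invFun := fun q => (q.1 - φ (ψ q.2) - φ c - c, q.2)
      left_inv := by intro q; ext <;> simp <;> abel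
      right_inv := by intro q; ext <;> simp <;> abel }
  have hF : (fun p : Q × Q =>
        (φ p.1 + ψ p.2 + c, ψ.symm p.1 - ψ.symm (φ p.2) - ψ.symm c))
      = ⇑σ ∘ Prod.map g id ∘ ⇑τ := by
    funext p
    show _ = ((g p.2 + φ (ψ (ψ.symm (p.1 - φ p.2 - c))) + φ c + c,
      ψ.symm (p.1 - φ p.2 - c)) : Q × Q)
    ext
    · simp only [hg, AddEquiv.apply_symm_apply, map_sub]
      abel
    · simp only [map_sub]
  rw [hF]
  rw [show (⇑σ ∘ Prod.map g id ∘ ⇑τ) = ⇑σ ∘ (Prod.map g id ∘ ⇑τ) from rfl,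
      Equiv.comp_bijective _ σ, Equiv.bijective_comp τ]
  constructor
  · rintro ⟨hinj, hsurj⟩
    constructor
    · intro a b hab
      have : Prod.map g id (a, (0 : Q)) = Prod.map g id (b, 0) := by
        simp [Prod.map, hab]
      simpa using congrArg Prod.fst (hinj this)
    · intro u
      obtain ⟨p, hp⟩ := hsurj (u, 0)
      exact ⟨p.1, (Prod.ext_iff.mp hp).1⟩
  · intro hgb
    exact hgb.prodMap Function.bijective_id
end

section
/- Let p be a prime, let k, m, c ∈ ZMod p, and suppose that k, m, k+m, k−m, k+1, m+1, k²+m, and k+m² are all nonzero in ZMod p. Define A(x,y) = k·x + m·y + c on ZMod p. Then A is orthogonal to each of its five parastrophes, namely to ^{(12)}A(x,y) = m·x + k·y + c, to ^{(13)}A(x,y) = k⁻¹·x − k⁻¹·m·y − k⁻¹·c, to ^{(23)}A(x,y) = −m⁻¹·k·x + m⁻¹·y − m⁻¹·c, to ^{(123)}A(x,y) = −k⁻¹·m·x + k⁻¹·y − k⁻¹·c, and to ^{(132)}A(x,y) = m⁻¹·x − m⁻¹·k·y − m⁻¹·c. -/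
/-- A linear map on `(ZMod p)²` with nonzero determinant is bijective. -/
lemma lin_bij (p : ℕ) [Fact p.Prime] (a b e a' b' e' : ZMod p)
    (hdet : a * b' - b * a' ≠ 0) :
    Function.Bijective (fun q : ZMod p × ZMod p =>
        (a * q.1 + b * q.2 + e, a' * q.1 + b' * q.2 + e')) := by
  rw [← Finite.injective_iff_bijective]
  rintro ⟨x₁, y₁⟩ ⟨x₂, y₂⟩ h
  simp only [Prod.mk.injEq] at h
  obtain ⟨h1, h2⟩ := h
  have e1 : a * (x₁ - x₂) + b * (y₁ - y₂) = 0 := by ring_nf; linear_combination h1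
  have e2 : a' * (x₁ - x₂) + b' * (y₁ - y₂) = 0 := by ring_nf; linear_combination h2
  have hx : x₁ - x₂ = 0 := by
    have : (a * b' - b * a') * (x₁ - x₂) = 0 := by linear_combination b' * e1 - b * e2
    exact (mul_eq_zero.mp this).resolve_left hdet
  have hy : y₁ - y₂ = 0 := by
    have : (a * b' - b * a') * (y₁ - y₂) = 0 := by linear_combination a * e2 - a' * e1
    exact (mul_eq_zero.mp this).resolve_left hdet
  exact Prod.ext (sub_eq_zero.mp hx) (sub_eq_zero.mp hy)

/-- Over `ZMod p` (`p` prime), the T-quasigroup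
`A(x,y) = k·x + m·y + c` with `k, m, k+m, k-m, k+1, m+1, k²+m, k+m² ≠ 0`
is orthogonal to every one of its five parastrophes. -/
theorem Tquasigroup_orth_all_parastrophes (p : ℕ) [Fact p.Prime]
    (k m c : ZMod p)
    (hk : k ≠ 0) (hm : m ≠ 0) (hkm : k + m ≠ 0) (hkm' : k - m ≠ 0)
    (hk1 : k + 1 ≠ 0) (hm1 : m + 1 ≠ 0)
    (hk2m : k ^ 2 + m ≠ 0) (hkm2 : k + m ^ 2 ≠ 0) :
    Function.Bijective (fun q : ZMod p × ZMod p =>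
        (k * q.1 + m * q.2 + c, m * q.1 + k * q.2 + c)) ∧
    Function.Bijective (fun q : ZMod p × ZMod p =>
        (k * q.1 + m * q.2 + c, k⁻¹ * q.1 - k⁻¹ * m * q.2 - k⁻¹ * c)) ∧
    Function.Bijective (fun q : ZMod p × ZMod p =>
        (k * q.1 + m * q.2 + c, -(m⁻¹ * k) * q.1 + m⁻¹ * q.2 - m⁻¹ * c)) ∧
    Function.Bijective (fun q : ZMod p × ZMod p =>
        (k * q.1 + m * q.2 + c, -(k⁻¹ * m) * q.1 + k⁻¹ * q.2 - k⁻¹ * c)) ∧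
    Function.Bijective (fun q : ZMod p × ZMod p =>
        (k * q.1 + m * q.2 + c, m⁻¹ * q.1 - m⁻¹ * k * q.2 - m⁻¹ * c)) := by
  refine ⟨?_, ?_, ?_, ?_, ?_⟩
  · exact lin_bij p k m c m k c (by
      intro h; apply hkm'; have := mul_eq_zero.mp (by linear_combination h :
        (k - m) * (k + m) = 0); tauto)
  · have h := lin_bij p k m c k⁻¹ (-(k⁻¹ * m)) (-(k⁻¹ * c)) (by
      have : k * -(k⁻¹ * m) - m * k⁻¹ = -(k⁻¹ * (m * (k + 1))) := by
        field_simp; ring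
      rw [this]
      simp [inv_eq_zero, hk, hm, hk1])
    convert h using 2 with q
    ring_nf
  · have h := lin_bij p k m c (-(m⁻¹ * k)) m⁻¹ (-(m⁻¹ * c)) (by
      have : k * m⁻¹ - m * -(m⁻¹ * k) = m⁻¹ * (k * (m + 1)) := by
        field_simp; ring
      rw [this]
      intro h
      rcases mul_eq_zero.mp h with h | h
      · exact hm (inv_eq_zero.mp h)
      · rcases mul_eq_zero.mp h with h | h
        exacts [hk h, hm1 h])
    convert h using 2 with q
    ring_nf
  · have h := lin_bij p k m c (-(k⁻¹ * m)) k⁻¹ (-(k⁻¹ * c)) (by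
      have : k * k⁻¹ - m * -(k⁻¹ * m) = k⁻¹ * (k + m ^ 2) := by
        field_simp; ring
      rw [this]
      intro h
      rcases mul_eq_zero.mp h with h | h
      exacts [hk (inv_eq_zero.mp h), hkm2 h])
    convert h using 2 with q
    ring_nf
  · have h := lin_bij p k m c m⁻¹ (-(m⁻¹ * k)) (-(m⁻¹ * c)) (by
      have : k * -(m⁻¹ * k) - m * m⁻¹ = -(m⁻¹ * (k ^ 2 + m)) := by
        field_simp; ring
      rw [this]
      intro h
      rw [neg_eq_zero] at h
      rcases mul_eq_zero.mp h with h | h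
      exacts [hm (inv_eq_zero.mp h), hk2m h])
    convert h using 2 with q
    ring_nf
end

section
/- (Toyoda's theorem) Let Q be a nonempty type with a binary operation · such that for every a ∈ Q the left translation x ↦ a·x and the right translation x ↦ x·a are bijections of Q, and suppose the medial identity (x·y)·(u·v) = (x·u)·(y·v) holds for all x, y, u, v ∈ Q. Then there exist an abelian group structure (Q,+) on Q, additive automorphisms φ and ψ of (Q,+) with φ ∘ ψ = ψ ∘ φ, and an element c ∈ Q such that x·y = φ(x) + ψ(y) + c for all x, y ∈ Q. -/
/-- Toyoda's theorem: every medial quasigroup `(Q, ·)` has the form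
`x·y = φ x + ψ y + c` for some abelian group structure `(Q,+)`, commuting
automorphisms `φ, ψ` of it, and a fixed element `c`. -/
theorem toyoda {Q : Type*} [Nonempty Q] (mul : Q → Q → Q)
    (hL : ∀ a : Q, Function.Bijective (fun x => mul a x))
    (hR : ∀ a : Q, Function.Bijective (fun x => mul x a))
    (hmedial : ∀ x y u v : Q,
      mul (mul x y) (mul u v) = mul (mul x u) (mul y v)) :
    ∃ inst : AddCommGroup Q,
      letI := inst
      ∃ (φ ψ : Q ≃+ Q) (c : Q),
        (⇑φ ∘ ⇑ψ = ⇑ψ ∘ ⇑φ) ∧ ∀ x y : Q, mul x y = φ x + ψ y + c := by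
  classical
  obtain ⟨e⟩ := ‹Nonempty Q›
  let π : Q ≃ Q := Equiv.ofBijective _ (hR e)
  let lam : Q ≃ Q := Equiv.ofBijective _ (hL e)
  let r : Q := lam.symm e
  let s : Q := π.symm e
  let Rr : Q ≃ Q := Equiv.ofBijective _ (hR r)
  let Ls : Q ≃ Q := Equiv.ofBijective _ (hL s)
  have hπ : ∀ x, π x = mul x e := fun _ => rfl
  have hlam : ∀ x, lam x = mul e x := fun _ => rfl
  have hRr : ∀ x, Rr x = mul x r := fun _ => rfl
  have hLs : ∀ x, Ls x = mul s x := fun _ => rfl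
  have hr : mul e r = e := lam.apply_symm_apply e
  have hs : mul s e = e := π.apply_symm_apply e
  have K : ∀ z, mul (mul s z) e = mul e (mul z r) := by
    intro z
    calc mul (mul s z) e = mul (mul s z) (mul e r) := by rw [hr]
    _ = mul (mul s e) (mul z r) := hmedial s z e r
    _ = mul e (mul z r) := by rw [hs]
  have πhom : ∀ u v, mul (mul u v) e = mul (mul u e) (mul v r) := by
    intro u v
    calc mul (mul u v) e = mul (mul u v) (mul e r) := by rw [hr]
    _ = mul (mul u e) (mul v r) := hmedial u v e r
  have lamhom : ∀ u v, mul e (mul u v) = mul (mul s u) (mul e v) := by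
    intro u v
    calc mul e (mul u v) = mul (mul s e) (mul u v) := by rw [hs]
    _ = mul (mul s u) (mul e v) := hmedial s e u v
  have πsymm_mul : ∀ a b, π.symm (mul a b) = mul (π.symm a) (Rr.symm b) := by
    intro a b
    rw [Equiv.symm_apply_eq, hπ, πhom, ← hπ (π.symm a), ← hRr (Rr.symm b),
      Equiv.apply_symm_apply, Equiv.apply_symm_apply]
  have lamsymm_mul : ∀ a b, lam.symm (mul a b) = mul (Ls.symm a) (lam.symm b) := by
    intro a b
    rw [Equiv.symm_apply_eq, hlam, lamhom, ← hLs (Ls.symm a), ← hlam (lam.symm b),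
      Equiv.apply_symm_apply, Equiv.apply_symm_apply]
  have K' : ∀ z, Rr.symm (lam.symm z) = Ls.symm (π.symm z) := by
    intro z
    rw [Equiv.symm_apply_eq, Equiv.symm_apply_eq, hlam, hRr, ← K, ← hLs, ← hπ,
      Equiv.apply_symm_apply, Equiv.apply_symm_apply]
  have zadd : ∀ a, mul (π.symm (mul e e)) (lam.symm a) = a := by
    intro a
    have h1 : π.symm (mul e e) = e := by
      rw [Equiv.symm_apply_eq]; exact (hπ e).symm
    rw [h1, ← hlam, Equiv.apply_symm_apply]
  have addz : ∀ a, mul (π.symm a) (lam.symm (mul e e)) = a := by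
    intro a
    have h1 : lam.symm (mul e e) = e := by
      rw [Equiv.symm_apply_eq]; exact (hlam e).symm
    rw [h1, ← hπ, Equiv.apply_symm_apply]
  have inter : ∀ a b c d,
      mul (π.symm (mul (π.symm a) (lam.symm b))) (lam.symm (mul (π.symm c) (lam.symm d)))
      = mul (π.symm (mul (π.symm a) (lam.symm c))) (lam.symm (mul (π.symm b) (lam.symm d))) := by
    intro a b c d
    rw [πsymm_mul, πsymm_mul, lamsymm_mul, lamsymm_mul, hmedial, K' b, K' c]
  have raw_comm : ∀ a b, mul (π.symm a) (lam.symm b) = mul (π.symm b) (lam.symm a) := by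
    intro a b
    have h := inter (mul e e) a b (mul e e)
    simp only [zadd, addz] at h
    exact h
  have raw_assoc : ∀ a b c,
      mul (π.symm a) (lam.symm (mul (π.symm b) (lam.symm c)))
      = mul (π.symm (mul (π.symm a) (lam.symm b))) (lam.symm c) := by
    intro a b c
    have h := inter a (mul e e) b c
    simp only [zadd, addz] at h
    exact h
  have raw_neg : ∀ a,
      mul (π.symm a)
        (lam.symm (mul e ((Equiv.ofBijective _ (hL (π.symm a))).symm (mul e e)))) = mul e e := by
    intro a
    have h1 : ∀ w, lam.symm (mul e w) = w := by
      intro w; rw [← hlam, Equiv.symm_apply_apply]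
    rw [h1]
    exact (Equiv.ofBijective _ (hL (π.symm a))).apply_symm_apply (mul e e)
  letI instA : Add Q := ⟨fun a b => mul (π.symm a) (lam.symm b)⟩
  letI instZ : Zero Q := ⟨mul e e⟩
  letI instN : Neg Q := ⟨fun a => mul e ((Equiv.ofBijective _ (hL (π.symm a))).symm (mul e e))⟩
  letI inst : AddCommGroup Q :=
  { add := (· + ·)
    zero := 0
    neg := Neg.neg
    add_assoc := fun a b c => (raw_assoc a b c).symm
    zero_add := zadd
    add_zero := addz
    nsmul := nsmulRec
    zsmul := zsmulRec
    neg_add_cancel := fun a => by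
      show mul (π.symm (mul e ((Equiv.ofBijective _ (hL (π.symm a))).symm (mul e e))))
        (lam.symm a) = mul e e
      rw [raw_comm]
      exact raw_neg a
    add_comm := raw_comm }
  have hadd : ∀ a b : Q, a + b = mul (π.symm a) (lam.symm b) := fun _ _ => rfl
  have hzero : (0 : Q) = mul e e := rfl
  have hmul_add : ∀ p q, mul p q = π p + lam q := by
    intro p q
    rw [hadd, Equiv.symm_apply_apply, Equiv.symm_apply_apply]
  have hπadd : ∀ a b : Q, π (a + b) = π a + lam (Rr (lam.symm b)) := by
    intro a b
    rw [hadd a b, hπ, πhom, ← hπ (π.symm a), Equiv.apply_symm_apply, ← hRr (lam.symm b),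
      hmul_add]
  have hφ0 : ∀ b : Q, lam (Rr (lam.symm b)) = π b - π 0 := by
    intro b
    have h := hπadd 0 b
    rw [zero_add] at h
    rw [h]
    abel
  have hπadd' : ∀ a b : Q, π (a + b) = π a + (π b - π 0) := by
    intro a b; rw [hπadd, hφ0]
  have hlamadd : ∀ a b : Q, lam (a + b) = π (Ls (π.symm a)) + lam b := by
    intro a b
    rw [hadd a b, hlam, lamhom, ← hlam (lam.symm b), Equiv.apply_symm_apply, ← hLs (π.symm a),
      hmul_add]
  have hψ0 : ∀ a : Q, π (Ls (π.symm a)) = lam a - lam 0 := by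
    intro a
    have h := hlamadd a 0
    rw [add_zero] at h
    rw [h]
    abel
  have hlamadd' : ∀ a b : Q, lam (a + b) = (lam a - lam 0) + lam b := by
    intro a b; rw [hlamadd, hψ0]
  let φ : Q ≃+ Q := AddEquiv.mk' (π.trans (Equiv.subRight (π 0))) (by
    intro a b
    show π (a + b) - π 0 = (π a - π 0) + (π b - π 0)
    rw [hπadd']
    abel)
  let ψ : Q ≃+ Q := AddEquiv.mk' (lam.trans (Equiv.subRight (lam 0))) (by
    intro a b
    show lam (a + b) - lam 0 = (lam a - lam 0) + (lam b - lam 0)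
    rw [hlamadd']
    abel)
  have hφ : ∀ x, φ x = π x - π 0 := fun _ => rfl
  have hψ : ∀ x, ψ x = lam x - lam 0 := fun _ => rfl
  have Klam : ∀ x, lam (mul x r) = π (mul s x) := by
    intro x; rw [hlam, hπ]; exact (K x).symm
  have hπlam : ∀ x : Q, π (lam x) = π 0 + π (mul s x) := by
    intro x
    rw [hlam x, hπ (mul e x), πhom, hmul_add, ← hzero, Klam]
  have hlamπ : ∀ x : Q, lam (π x) = π (mul s x) + lam 0 := by
    intro x
    rw [hπ x, hlam (mul x e), lamhom, hmul_add, ← hzero]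
  have hcomm : ⇑φ ∘ ⇑ψ = ⇑ψ ∘ ⇑φ := by
    funext x
    show φ (ψ x) = ψ (φ x)
    have e1 : φ (ψ x) = (π (lam x) - π 0) - (π (lam 0) - π 0) := by
      rw [hψ, map_sub, hφ, hφ]
    have e2 : ψ (φ x) = (lam (π x) - lam 0) - (lam (π 0) - lam 0) := by
      rw [hφ, map_sub, hψ, hψ]
    rw [e1, e2, hπlam, hπlam, hlamπ, hlamπ]
    abel
  have hmuleq : ∀ x y : Q, mul x y = φ x + ψ y + (π 0 + lam 0) := by
    intro x y
    rw [hmul_add, hφ, hψ]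
    abel
  exact ⟨inst, φ, ψ, π 0 + lam 0, hcomm, hmuleq⟩
end
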